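/- Let X be a metric space, let r > 0, and let 𝒰' be a cover of X such that for each finite subset σ ⊆ X: σ is contained in some element of 𝒰' iff diam(σ) ≤ r. Then the closed Rips complex Rips̄(X,r) is homotopy equivalent to the nerve N(𝒰'). -/

import Mathlib

open Set

noncomputable section

namespace RipsPaper

universe u v

/-- The closed geometric simplex spanned by the finite vertex set `σ`,
as a set of barycentric-coordinate functions. -/
def simplexCarrier {V : Type u} (σ : Finset V) : Set (V → ℝ) :=
  {f | (∀ v, 0 ≤ f v) ∧ (∀ v, v ∉ σ → f v = 0) ∧ ∑ v ∈ σ, f v = 1}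

/-- The underlying set of the geometric realization of the abstract simplicial complex
whose faces are the finite sets in `K`. -/
def realizationCarrier {V : Type u} (K : Set (Finset V)) : Set (V → ℝ) :=
  {f | ∃ σ ∈ K, f ∈ simplexCarrier σ}

/-- The geometric realization (as a type) of the abstract simplicial complex with face set `K`. -/
structure Realization {V : Type u} (K : Set (Finset V)) : Type u where
  toFun : V → ℝ
  mem : toFun ∈ realizationCarrier K

/-- The inclusion of a closed simplex of the complex into the realization. -/
def simplexIncl {V : Type u} {K : Set (Finset V)} {σ : Finset V} (hσ : σ ∈ K)
    (f : simplexCarrier σ) : Realization K :=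
  ⟨f.1, ⟨σ, hσ, f.2⟩⟩

/-- The weak topology on the geometric realization: the final topology induced by the
inclusions of all closed simplices (each carrying its natural Euclidean topology). -/
instance {V : Type u} (K : Set (Finset V)) : TopologicalSpace (Realization K) :=
  ⨆ σ : {τ : Finset V // τ ∈ K}, TopologicalSpace.coinduced (simplexIncl σ.2) inferInstance

/-- Two spaces are homotopy equivalent. -/
def HomotopyEquivalent (X : Type u) (Y : Type v) [TopologicalSpace X]
    [TopologicalSpace Y] : Prop :=
  Nonempty (ContinuousMap.HomotopyEquiv X Y)

/-- Two (continuous) functions are homotopic. -/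
def FnHomotopic {X : Type u} {Y : Type v} [TopologicalSpace X] [TopologicalSpace Y]
    (f g : X → Y) : Prop :=
  ∃ (hf : Continuous f) (hg : Continuous g),
    (⟨f, hf⟩ : C(X, Y)).Homotopic ⟨g, hg⟩

/-- A function is a homotopy equivalence. -/
def IsHotEquiv {X : Type u} {Y : Type v} [TopologicalSpace X] [TopologicalSpace Y]
    (f : X → Y) : Prop :=
  Continuous f ∧ ∃ g : Y → X, Continuous g ∧
    FnHomotopic (g ∘ f) id ∧ FnHomotopic (f ∘ g) id

/-- The nerve of a collection `𝒰` of subsets of `X`: vertices are the (nonempty) elements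
of `𝒰`, and a finite subcollection spans a simplex iff it has a common point. -/
def nerve {X : Type u} (𝒰 : Set (Set X)) : Set (Finset (Set X)) :=
  {σ | σ.Nonempty ∧ ↑σ ⊆ 𝒰 ∧ (⋂ U ∈ σ, U).Nonempty}

/-- The Vietoris complex of a collection `𝒰` of subsets of `X`: vertices are points of `X`,
and a finite set of points spans a simplex iff it is contained in some element of `𝒰`. -/
def vietoris {X : Type u} (𝒰 : Set (Set X)) : Set (Finset X) :=
  {σ | σ.Nonempty ∧ ∃ U ∈ 𝒰, ↑σ ⊆ U}

/-- The open Rips complex of a metric space at scale `r`. -/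
def rips (X : Type u) [MetricSpace X] (r : ℝ) : Set (Finset X) :=
  {σ | σ.Nonempty ∧ Metric.diam (σ : Set X) < r}

/-- The closed Rips complex of a metric space at scale `r`. -/
def ripsClosed (X : Type u) [MetricSpace X] (r : ℝ) : Set (Finset X) :=
  {σ | σ.Nonempty ∧ Metric.diam (σ : Set X) ≤ r}

/-- The open Rips complex of a subset `A` of a metric space at scale `r`. -/
def ripsOn {X : Type u} [MetricSpace X] (A : Set X) (r : ℝ) : Set (Finset X) :=
  {σ | σ.Nonempty ∧ ↑σ ⊆ A ∧ Metric.diam (σ : Set X) < r}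

/-- The (open) Čech complex of a metric space at scale `r`. -/
def cech (X : Type u) [MetricSpace X] (r : ℝ) : Set (Finset X) :=
  {σ | σ.Nonempty ∧ (⋂ x ∈ σ, Metric.ball x r).Nonempty}

/-- `𝒰` is a cover of `X`. -/
def IsCover {X : Type u} (𝒰 : Set (Set X)) : Prop := ⋃₀ 𝒰 = univ

/-- A collection of subsets is good if every nonempty intersection of a finite
subcollection is contractible. -/
def IsGoodCover {X : Type u} [TopologicalSpace X] (𝒰 : Set (Set X)) : Prop :=
  ∀ σ : Finset (Set X), ↑σ ⊆ 𝒰 → σ.Nonempty → (⋂ U ∈ σ, U).Nonempty →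
    ContractibleSpace ↥(⋂ U ∈ σ, U)

/-- A cover is numerable if it admits a locally finite partition of unity subordinated
to it. -/
def IsNumerable {X : Type u} [TopologicalSpace X] (𝒰 : Set (Set X)) : Prop :=
  ∃ (ι : Type u) (ρ : PartitionOfUnity ι X Set.univ) (g : ι → Set X),
    (∀ i, g i ∈ 𝒰) ∧ ρ.IsSubordinate g

/-- `iU` is the canonical map `X → N(𝒰)` determined (via barycentric coordinates)
by the partition of unity `ρ`, subordinated to `𝒰` via the assignment `g`. -/
def IsNerveMap {X : Type u} [TopologicalSpace X] (𝒰 : Set (Set X)) {ι : Type v}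
    (ρ : PartitionOfUnity ι X Set.univ) (g : ι → Set X)
    (iU : X → Realization (nerve 𝒰)) : Prop :=
  ∀ (x : X) (U : Set X), (iU x).toFun U = ∑ᶠ i ∈ {i | g i = U}, ρ i x

/-- `Φ` is the map of geometric realizations induced by the vertex map `h`
(pushforward of barycentric coordinates). -/
def IsInducedMap {V : Type u} {W : Type v} {K : Set (Finset V)} {L : Set (Finset W)}
    (h : V → W) (Φ : Realization K → Realization L) : Prop :=
  ∀ (p : Realization K) (w : W), (Φ p).toFun w = ∑ᶠ v ∈ {v | h v = w}, p.toFun v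

/-- `Φ` is the inclusion of the realization of a subcomplex `K ⊆ L`. -/
def IsSubcomplexInclusion {V : Type u} {K L : Set (Finset V)}
    (Φ : Realization K → Realization L) : Prop :=
  ∀ p, (Φ p).toFun = p.toFun

end RipsPaper

namespace RipsPaper

open Function

universe x y

variable {V : Type x} {W : Type y}

/-- `K` is an abstract simplicial complex (nonempty faces, downward closed). -/
def Cx (K : Set (Finset V)) : Prop :=
  (∀ σ ∈ K, σ.Nonempty) ∧ ∀ σ ∈ K, ∀ τ : Finset V, τ ⊆ σ → τ.Nonempty → τ ∈ K

lemma Realization.ext' {K : Set (Finset V)} {p q : Realization K}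
    (h : p.toFun = q.toFun) : p = q := by
  cases p; cases q; simpa using h

lemma simplexCarrier_mono {σ τ : Finset V} (hστ : σ ⊆ τ) {f : V → ℝ}
    (hf : f ∈ simplexCarrier σ) : f ∈ simplexCarrier τ := by
  obtain ⟨h0, hz, hs⟩ := hf
  refine ⟨h0, fun v hv => hz v fun hv' => hv (hστ hv'), ?_⟩
  rw [← hs]
  exact (Finset.sum_subset hστ (fun v hv hv' => hz v hv')).symm

lemma convex_combo {σ : Finset V} {f g : V → ℝ} (hf : f ∈ simplexCarrier σ)
    (hg : g ∈ simplexCarrier σ) {t : ℝ} (h0 : 0 ≤ t) (h1 : t ≤ 1) :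
    (fun v => (1 - t) * f v + t * g v) ∈ simplexCarrier σ := by
  obtain ⟨hf0, hfz, hfs⟩ := hf
  obtain ⟨hg0, hgz, hgs⟩ := hg
  refine ⟨fun v => add_nonneg (mul_nonneg (by linarith) (hf0 v)) (mul_nonneg h0 (hg0 v)),
    fun v hv => by simp [hfz v hv, hgz v hv], ?_⟩
  simp [Finset.sum_add_distrib, ← Finset.mul_sum, hfs, hgs]

lemma isCompact_simplexCarrier (σ : Finset V) : IsCompact (simplexCarrier σ) := by
  classical
  have hsub : simplexCarrier σ ⊆ Set.univ.pi fun v : V => Set.Icc (0:ℝ) 1 := by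
    intro f hf v _
    obtain ⟨h0, hz, hs⟩ := hf
    refine ⟨h0 v, ?_⟩
    by_cases hv : v ∈ σ
    · calc f v ≤ ∑ w ∈ σ, f w := Finset.single_le_sum (fun w _ => h0 w) hv
        _ = 1 := hs
    · simp [hz v hv]
  have hc : IsClosed (simplexCarrier σ) := by
    have h1 : IsClosed {f : V → ℝ | ∀ v, 0 ≤ f v} := by
      have : {f : V → ℝ | ∀ v, 0 ≤ f v} = ⋂ v, {f | 0 ≤ f v} := by ext f; simp
      rw [this]
      exact isClosed_iInter fun v => isClosed_le continuous_const (continuous_apply v)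
    have h2 : IsClosed {f : V → ℝ | ∀ v, v ∉ σ → f v = 0} := by
      have : {f : V → ℝ | ∀ v, v ∉ σ → f v = 0} = ⋂ (v) (_ : v ∉ σ), {f | f v = 0} := by
        ext f; simp
      rw [this]
      exact isClosed_iInter fun v => isClosed_iInter fun _ =>
        isClosed_eq (continuous_apply v) continuous_const
    have h3 : IsClosed {f : V → ℝ | ∑ v ∈ σ, f v = 1} :=
      isClosed_eq (by continuity) continuous_const
    have : simplexCarrier σ =
        {f : V → ℝ | ∀ v, 0 ≤ f v} ∩ ({f | ∀ v, v ∉ σ → f v = 0} ∩ {f | ∑ v ∈ σ, f v = 1}) := by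
      ext f; exact Iff.rfl
    rw [this]
    exact h1.inter (h2.inter h3)
  exact (isCompact_univ_pi fun v => isCompact_Icc).of_isClosed_subset hc hsub

lemma continuous_simplexIncl {K : Set (Finset V)} {σ : Finset V} (hσ : σ ∈ K) :
    Continuous (simplexIncl hσ) := by
  rw [continuous_iff_coinduced_le]
  exact le_iSup (fun σ' : {τ : Finset V // τ ∈ K} =>
    TopologicalSpace.coinduced (simplexIncl σ'.2) inferInstance) ⟨σ, hσ⟩

lemma Realization.continuous_dom {K : Set (Finset V)} {Y : Type*} [TopologicalSpace Y]
    {F : Realization K → Y}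
    (h : ∀ (σ : Finset V) (hσ : σ ∈ K), Continuous (F ∘ simplexIncl hσ)) : Continuous F := by
  rw [continuous_iSup_dom]
  intro i
  rw [continuous_coinduced_dom]
  exact h i.1 i.2

lemma Realization.continuous_toFun {K : Set (Finset V)} :
    Continuous fun p : Realization K => p.toFun := by
  refine Realization.continuous_dom fun σ hσ => ?_
  exact continuous_subtype_val

/-- Build a continuous map between realizations from a function on coordinates with
simplexwise carriers and simplexwise continuity. -/
lemma exists_realization_map {K : Set (Finset V)} {L : Set (Finset W)}
    (F0 : (V → ℝ) → (W → ℝ))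
    (hcar : ∀ σ ∈ K, ∃ τ ∈ L, ∀ f ∈ simplexCarrier σ, F0 f ∈ simplexCarrier τ)
    (hcont : ∀ σ ∈ K, ContinuousOn F0 (simplexCarrier σ)) :
    ∃ F : Realization K → Realization L,
      Continuous F ∧ ∀ p : Realization K, (F p).toFun = F0 p.toFun := by
  have hmem : ∀ p : Realization K, F0 p.toFun ∈ realizationCarrier L := by
    intro p
    obtain ⟨σ, hσ, hf⟩ := p.mem
    obtain ⟨τ, hτ, hc⟩ := hcar σ hσ
    exact ⟨τ, hτ, hc _ hf⟩
  refine ⟨fun p => ⟨F0 p.toFun, hmem p⟩, ?_, fun p => rfl⟩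
  refine Realization.continuous_dom fun σ hσ => ?_
  obtain ⟨τ, hτ, hc⟩ := hcar σ hσ
  have hcont' : Continuous fun f : simplexCarrier σ =>
      (⟨F0 f.1, hc f.1 f.2⟩ : simplexCarrier τ) :=
    Continuous.subtype_mk ((hcont σ hσ).restrict) _
  have : (fun p => (⟨F0 p.toFun, hmem p⟩ : Realization L)) ∘ simplexIncl hσ
      = simplexIncl hτ ∘ fun f : simplexCarrier σ => (⟨F0 f.1, hc f.1 f.2⟩ : simplexCarrier τ) :=
    rfl
  rw [this]
  exact (continuous_simplexIncl hτ).comp hcont'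

end RipsPaper
namespace RipsPaper

open Function

universe x y

variable {V : Type x} {W : Type y}

lemma support_subset_of_mem {σ : Finset V} {f : V → ℝ} (hf : f ∈ simplexCarrier σ) :
    Function.support f ⊆ ↑σ := by
  intro v hv
  by_contra hc
  exact hv (hf.2.1 v hc)

/-- barycentric weight of vertex `v` in simplex `τ`. -/
def weight (τ : Finset V) (v : V) : ℝ := by
  classical exact if v ∈ τ then (τ.card : ℝ)⁻¹ else 0

lemma weight_nonneg (τ : Finset V) (v : V) : 0 ≤ weight τ v := by
  unfold weight
  split
  · positivity
  · exact le_refl 0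

lemma weight_eq_zero {τ : Finset V} {v : V} (hv : v ∉ τ) : weight τ v = 0 := by
  unfold weight; split <;> simp_all

lemma sum_weight {τ A : Finset V} (hne : τ.Nonempty) (hsub : τ ⊆ A) :
    ∑ v ∈ A, weight τ v = 1 := by
  classical
  unfold weight
  rw [Finset.sum_ite_mem]
  rw [Finset.inter_eq_right.mpr hsub, Finset.sum_const, nsmul_eq_mul]
  rw [mul_inv_cancel₀]
  exact_mod_cast Finset.card_ne_zero_of_mem hne.choose_spec

/-- finite-sum representation of the barycenter map. -/
def rep (g : Finset V → ℝ) (D : Finset (Finset V)) (v : V) : ℝ :=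
  ∑ τ ∈ D, g τ * weight τ v

/-- the barycenter map on coordinates. -/
def sMap0 (g : Finset V → ℝ) (v : V) : ℝ := ∑ᶠ τ, g τ * weight τ v

lemma sMap0_eq_rep {g : Finset V → ℝ} {D : Finset (Finset V)}
    (h : Function.support g ⊆ ↑D) : sMap0 g = rep g D := by
  funext v
  exact finsum_eq_sum_of_support_subset _ (fun τ hτ => h (fun h0 => hτ (by simp [h0])))

lemma sum_rep {g : Finset V → ℝ} {D : Finset (Finset V)} {A : Finset V}
    (h : ∀ τ ∈ D, g τ ≠ 0 → τ.Nonempty ∧ τ ⊆ A) :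
    ∑ v ∈ A, rep g D v = ∑ τ ∈ D, g τ := by
  unfold rep
  rw [Finset.sum_comm]
  refine Finset.sum_congr rfl fun τ hτ => ?_
  by_cases h0 : g τ = 0
  · simp [h0]
  · rw [← Finset.mul_sum, sum_weight (h τ hτ h0).1 (h τ hτ h0).2, mul_one]

/-- the barycentric subdivision of a complex. -/
def sd (K : Set (Finset V)) : Set (Finset (Finset V)) :=
  {C | C.Nonempty ∧ ↑C ⊆ K ∧ IsChain (· ⊆ ·) (↑C : Set (Finset V))}

lemma sd_cx {K : Set (Finset V)} (_ : Cx K) : Cx (sd K) := by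
  constructor
  · exact fun C hC => hC.1
  · rintro C ⟨_, hCK, hch⟩ D hDC hDne
    exact ⟨hDne, fun τ hτ => hCK (hDC hτ), hch.mono (fun τ hτ => hDC hτ)⟩

lemma chain_max {C : Finset (Finset V)} (hne : C.Nonempty)
    (hch : IsChain (· ⊆ ·) (↑C : Set (Finset V))) : ∃ M ∈ C, ∀ τ ∈ C, τ ⊆ M := by
  obtain ⟨M, hM, hmax⟩ : ∃ M ∈ C, ∀ x ∈ C, ¬ M < x := by
    obtain ⟨M, hM⟩ := Finset.exists_maximal hne
    exact ⟨M, hM.1, fun x hx hlt => (lt_iff_le_not_ge.mp hlt).2 (hM.2 hx (le_of_lt hlt))⟩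
  refine ⟨M, hM, fun τ hτ => ?_⟩
  rcases eq_or_ne τ M with rfl | hne'
  · exact Finset.Subset.refl _
  · rcases hch hτ hM hne' with h | h
    · exact h
    · exact absurd (lt_of_le_of_ne h (fun h' => hne' h'.symm)) (hmax τ hτ)

lemma chain_min {C : Finset (Finset V)} (hne : C.Nonempty)
    (hch : IsChain (· ⊆ ·) (↑C : Set (Finset V))) : ∃ m ∈ C, ∀ τ ∈ C, m ⊆ τ := by
  obtain ⟨m, hm, hmin⟩ : ∃ m ∈ C, ∀ x ∈ C, ¬ x < m := by
    obtain ⟨m, hm⟩ := Finset.exists_minimal hne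
    exact ⟨m, hm.1, fun x hx hlt => (lt_iff_le_not_ge.mp hlt).2 (hm.2 hx (le_of_lt hlt))⟩
  refine ⟨m, hm, fun τ hτ => ?_⟩
  rcases eq_or_ne τ m with rfl | hne'
  · exact Finset.Subset.refl _
  · rcases hch hτ hm hne' with h | h
    · exact absurd (lt_of_le_of_ne h hne') (hmin τ hτ)
    · exact h

lemma sMap0_mem {K : Set (Finset V)} (hK : Cx K) {C : Finset (Finset V)} (hC : C ∈ sd K)
    {g : Finset V → ℝ} (hg : g ∈ simplexCarrier C) {τ : Finset V}
    (hτ : ∀ ρ ∈ C, ρ ⊆ τ) : sMap0 g ∈ simplexCarrier τ := by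
  have hsupp : Function.support g ⊆ ↑C := support_subset_of_mem hg
  rw [sMap0_eq_rep hsupp]
  refine ⟨fun v => Finset.sum_nonneg fun ρ _ => mul_nonneg (hg.1 ρ) (weight_nonneg ρ v), ?_, ?_⟩
  · intro v hv
    refine Finset.sum_eq_zero fun ρ hρ => ?_
    by_cases h0 : g ρ = 0
    · simp [h0]
    · rw [weight_eq_zero (fun hvρ => hv (hτ ρ hρ hvρ)), mul_zero]
  · rw [sum_rep (fun ρ hρ h0 => ⟨hK.1 ρ (hC.2.1 hρ), hτ ρ hρ⟩), hg.2.2]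

lemma continuousOn_sMap0 (C : Finset (Finset V)) :
    ContinuousOn sMap0 (simplexCarrier C : Set (Finset V → ℝ)) := by
  refine ContinuousOn.congr (f := fun g v => rep g C v) ?_ ?_
  · refine Continuous.continuousOn (continuous_pi fun v => ?_)
    exact continuous_finset_sum _ fun τ _ => (continuous_apply τ).mul continuous_const
  · intro g hg
    exact sMap0_eq_rep (support_subset_of_mem hg)

/-- the map on coordinates induced by a vertex map. -/
def vMap0 (h : V → W) (f : V → ℝ) (w : W) : ℝ := by
  classical exact ∑ᶠ v, if h v = w then f v else 0

def vrep (h : V → W) (f : V → ℝ) (σ : Finset V) (w : W) : ℝ := by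
  classical exact ∑ v ∈ σ, if h v = w then f v else 0

lemma vMap0_eq_vrep {h : V → W} {f : V → ℝ} {σ : Finset V}
    (hf : Function.support f ⊆ ↑σ) : vMap0 h f = vrep h f σ := by
  funext w
  unfold vMap0 vrep
  refine finsum_eq_sum_of_support_subset _ (fun v hv => hf ?_)
  simp only [Function.mem_support] at hv ⊢
  intro h0
  apply hv
  split <;> simp [h0]

lemma vMap0_mem {h : V → W} {f : V → ℝ} {σ : Finset V} (hf : f ∈ simplexCarrier σ)
    {τ : Finset W} (hτ : ∀ v ∈ σ, h v ∈ τ) : vMap0 h f ∈ simplexCarrier τ := by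
  classical
  rw [vMap0_eq_vrep (support_subset_of_mem hf)]
  refine ⟨?_, ?_, ?_⟩
  · intro w
    exact Finset.sum_nonneg fun v _ => by split <;> [exact hf.1 v; exact le_refl 0]
  · intro w hw
    refine Finset.sum_eq_zero fun v hv => ?_
    have hne : ¬ (h v = w) := fun he => hw (he ▸ hτ v hv)
    simp only [hne, if_false]
  · unfold vrep
    calc ∑ w ∈ τ, ∑ v ∈ σ, (if h v = w then f v else 0)
        = ∑ w ∈ τ, ∑ v ∈ σ.filter (fun v => h v = w), f v := by
          refine Finset.sum_congr rfl fun w _ => ?_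
          rw [Finset.sum_filter]
      _ = ∑ v ∈ σ, f v := Finset.sum_fiberwise_of_maps_to hτ f
      _ = 1 := hf.2.2

lemma continuousOn_vMap0 (h : V → W) (σ : Finset V) :
    ContinuousOn (vMap0 h) (simplexCarrier σ : Set (V → ℝ)) := by
  classical
  refine ContinuousOn.congr (f := fun f => vrep h f σ) ?_ ?_
  · refine Continuous.continuousOn (continuous_pi fun w => ?_)
    refine continuous_finset_sum _ fun v _ => ?_
    split
    · exact continuous_apply v
    · exact continuous_const
  · intro f hf
    exact vMap0_eq_vrep (support_subset_of_mem hf)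

end RipsPaper
namespace RipsPaper

universe x y

variable {V : Type x} {W : Type y}

lemma fnHomotopic_refl {X Y : Type*} [TopologicalSpace X] [TopologicalSpace Y]
    {f : X → Y} (hf : Continuous f) : FnHomotopic f f :=
  ⟨hf, hf, ContinuousMap.Homotopic.refl _⟩

lemma FnHomotopic.symm' {X Y : Type*} [TopologicalSpace X] [TopologicalSpace Y]
    {f g : X → Y} (h : FnHomotopic f g) : FnHomotopic g f := by
  obtain ⟨hf, hg, H⟩ := h
  exact ⟨hg, hf, H.symm⟩

lemma FnHomotopic.trans' {X Y : Type*} [TopologicalSpace X] [TopologicalSpace Y]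
    {f g h : X → Y} (h1 : FnHomotopic f g) (h2 : FnHomotopic g h) : FnHomotopic f h := by
  obtain ⟨hf, hg, H1⟩ := h1
  obtain ⟨hg', hh, H2⟩ := h2
  exact ⟨hf, hh, H1.trans H2⟩

lemma FnHomotopic.compl {X Y Z : Type*} [TopologicalSpace X] [TopologicalSpace Y]
    [TopologicalSpace Z] {f g : X → Y} (h : FnHomotopic f g) {e : Y → Z}
    (he : Continuous e) : FnHomotopic (e ∘ f) (e ∘ g) := by
  obtain ⟨hf, hg, H⟩ := h
  exact ⟨he.comp hf, he.comp hg, (ContinuousMap.Homotopic.refl ⟨e, he⟩).comp H⟩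

lemma FnHomotopic.compr {X Y Z : Type*} [TopologicalSpace X] [TopologicalSpace Y]
    [TopologicalSpace Z] {f g : Y → Z} (h : FnHomotopic f g) {e : X → Y}
    (he : Continuous e) : FnHomotopic (f ∘ e) (g ∘ e) := by
  obtain ⟨hf, hg, H⟩ := h
  exact ⟨hf.comp he, hg.comp he, H.comp (ContinuousMap.Homotopic.refl ⟨e, he⟩)⟩

/-- The straight-line homotopy between two maps of realizations that are simplexwise
jointly carried. -/
lemma fnHomotopic_of_carrier {K : Set (Finset V)} {L : Set (Finset W)}
    {F G : Realization K → Realization L} (hF : Continuous F) (hG : Continuous G)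
    (hcar : ∀ σ ∈ K, ∃ τ ∈ L, ∀ p : Realization K, p.toFun ∈ simplexCarrier σ →
      (F p).toFun ∈ simplexCarrier τ ∧ (G p).toFun ∈ simplexCarrier τ) :
    FnHomotopic F G := by
  have hmem : ∀ (p : Realization K) (t : unitInterval),
      (fun w => (1 - t.1) * (F p).toFun w + t.1 * (G p).toFun w) ∈ realizationCarrier L := by
    intro p t
    obtain ⟨σ, hσ, hp⟩ := p.mem
    obtain ⟨τ, hτ, hc⟩ := hcar σ hσ
    exact ⟨τ, hτ, convex_combo (hc p hp).1 (hc p hp).2 t.2.1 t.2.2⟩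
  set Hfun : Realization K → unitInterval → Realization L :=
    fun p t => ⟨fun w => (1 - t.1) * (F p).toFun w + t.1 * (G p).toFun w, hmem p t⟩ with hHfun
  have hcont1 : ∀ p : Realization K, Continuous (Hfun p) := by
    intro p
    obtain ⟨σ, hσ, hp⟩ := p.mem
    obtain ⟨τ, hτ, hc⟩ := hcar σ hσ
    have he : Hfun p = simplexIncl hτ ∘ fun t : unitInterval =>
        (⟨fun w => (1 - t.1) * (F p).toFun w + t.1 * (G p).toFun w,
          convex_combo (hc p hp).1 (hc p hp).2 t.2.1 t.2.2⟩ : simplexCarrier τ) := by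
      funext t
      exact Realization.ext' rfl
    rw [he]
    refine (continuous_simplexIncl hτ).comp (Continuous.subtype_mk ?_ _)
    refine continuous_pi fun w => ?_
    have htc : Continuous fun t : unitInterval => (t.1 : ℝ) := continuous_subtype_val
    exact ((continuous_const.sub htc).mul continuous_const).add (htc.mul continuous_const)
  set H1 : Realization K → C(unitInterval, Realization L) :=
    fun p => ⟨Hfun p, hcont1 p⟩ with hH1
  have hcontH1 : Continuous H1 := by
    refine Realization.continuous_dom fun σ hσ => ?_
    obtain ⟨τ, hτ, hc⟩ := hcar σ hσ
    have hFc : Continuous fun q : simplexCarrier σ × unitInterval =>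
        (F (simplexIncl hσ q.1)).toFun :=
      Realization.continuous_toFun.comp (hF.comp ((continuous_simplexIncl hσ).comp continuous_fst))
    have hGc : Continuous fun q : simplexCarrier σ × unitInterval =>
        (G (simplexIncl hσ q.1)).toFun :=
      Realization.continuous_toFun.comp (hG.comp ((continuous_simplexIncl hσ).comp continuous_fst))
    have htc : Continuous fun q : simplexCarrier σ × unitInterval => ((q.2 : ℝ) : ℝ) :=
      continuous_subtype_val.comp continuous_snd
    have hm : Continuous fun q : simplexCarrier σ × unitInterval =>
        Hfun (simplexIncl hσ q.1) q.2 := by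
      have he : (fun q : simplexCarrier σ × unitInterval => Hfun (simplexIncl hσ q.1) q.2)
          = simplexIncl hτ ∘ fun q : simplexCarrier σ × unitInterval =>
            (⟨fun w => (1 - q.2.1) * (F (simplexIncl hσ q.1)).toFun w
                + q.2.1 * (G (simplexIncl hσ q.1)).toFun w,
              convex_combo (hc _ q.1.2).1 (hc _ q.1.2).2 q.2.2.1 q.2.2.2⟩ : simplexCarrier τ) := by
        funext q
        exact Realization.ext' rfl
      rw [he]
      refine (continuous_simplexIncl hτ).comp (Continuous.subtype_mk ?_ _)
      refine continuous_pi fun w => ?_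
      exact ((continuous_const.sub htc).mul ((continuous_apply w).comp hFc)).add
        (htc.mul ((continuous_apply w).comp hGc))
    have hcurry : H1 ∘ simplexIncl hσ = ⇑(ContinuousMap.curry ⟨_, hm⟩) := by
      funext x
      ext t
      rfl
    rw [hcurry]
    exact (ContinuousMap.curry _).continuous
  refine ⟨hF, hG, ⟨?_⟩⟩
  refine ContinuousMap.Homotopy.mk
    ((ContinuousMap.uncurry ⟨H1, hcontH1⟩).comp ⟨Prod.swap, continuous_swap⟩) ?_ ?_
  · intro p
    refine Realization.ext' ?_
    funext w
    show (1 - (0:ℝ)) * (F p).toFun w + (0:ℝ) * (G p).toFun w = (F p).toFun w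
    ring
  · intro p
    refine Realization.ext' ?_
    funext w
    show (1 - (1:ℝ)) * (F p).toFun w + (1:ℝ) * (G p).toFun w = (G p).toFun w
    ring

end RipsPaper
namespace RipsPaper

universe x y

variable {V : Type x} {W : Type y}

lemma Realization.isClosed_iff {K : Set (Finset V)} {s : Set (Realization K)} :
    IsClosed s ↔ ∀ (σ : Finset V) (hσ : σ ∈ K), IsClosed (simplexIncl hσ ⁻¹' s) := by
  constructor
  · intro hs σ hσ
    exact hs.preimage (continuous_simplexIncl hσ)
  · intro h
    rw [← isOpen_compl_iff]
    show @IsOpen _ (⨆ σ : {τ : Finset V // τ ∈ K},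
      TopologicalSpace.coinduced (simplexIncl σ.2) inferInstance) sᶜ
    rw [isOpen_iSup_iff]
    intro i
    rw [isOpen_coinduced]
    rw [Set.preimage_compl]
    exact (h i.1 i.2).isOpen_compl

/-- the set of points of the realization lying in the closed simplex `σ`. -/
def simplexSet (K : Set (Finset V)) (σ : Finset V) : Set (Realization K) :=
  {p | p.toFun ∈ simplexCarrier σ}

lemma simplexSet_eq_range {K : Set (Finset V)} {σ : Finset V} (hσ : σ ∈ K) :
    simplexSet K σ = Set.range (simplexIncl hσ) := by
  ext p
  constructor
  · intro hp
    exact ⟨⟨p.toFun, hp⟩, Realization.ext' rfl⟩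
  · rintro ⟨f, rfl⟩
    exact f.2

lemma isCompact_simplexSet {K : Set (Finset V)} {σ : Finset V} (hσ : σ ∈ K) :
    IsCompact (simplexSet K σ) := by
  rw [simplexSet_eq_range hσ]
  haveI : CompactSpace (simplexCarrier σ) :=
    isCompact_iff_compactSpace.mp (isCompact_simplexCarrier σ)
  exact isCompact_range (continuous_simplexIncl hσ)

lemma isClosedMap_realization {M : Set (Finset V)} {N : Set (Finset W)}
    {F : Realization M → Realization N} (hF : Continuous F)
    (hfib : ∀ τ ∈ N, IsCompact (F ⁻¹' simplexSet N τ)) : IsClosedMap F := by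
  intro C hC
  rw [Realization.isClosed_iff]
  intro τ hτ
  have hCP : IsCompact (C ∩ F ⁻¹' simplexSet N τ) := ((hfib τ hτ).inter_left hC)
  have hT : IsCompact ((fun q : Realization N => q.toFun) '' (F '' (C ∩ F ⁻¹' simplexSet N τ))) :=
    (hCP.image hF).image Realization.continuous_toFun
  have heq : simplexIncl hτ ⁻¹' (F '' C) =
      Subtype.val ⁻¹' ((fun q : Realization N => q.toFun) ''
        (F '' (C ∩ F ⁻¹' simplexSet N τ))) := by
    ext x
    constructor
    · rintro ⟨p, hpC, hpe⟩
      refine ⟨F p, ⟨p, ⟨hpC, ?_⟩, rfl⟩, ?_⟩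
      · show (F p).toFun ∈ simplexCarrier τ
        rw [hpe]
        exact x.2
      · rw [hpe]
        rfl
    · rintro ⟨q, ⟨p, hp, rfl⟩, hqx⟩
      exact ⟨p, hp.1, Realization.ext' hqx⟩
  rw [heq]
  exact (hT.isClosed.preimage continuous_subtype_val)

lemma exists_continuous_inverse {M : Set (Finset V)} {N : Set (Finset W)}
    {F : Realization M → Realization N} (hF : Continuous F) (hbij : Function.Bijective F)
    (hfib : ∀ τ ∈ N, IsCompact (F ⁻¹' simplexSet N τ)) :
    ∃ G : Realization N → Realization M,
      Continuous G ∧ (∀ p, G (F p) = p) ∧ (∀ q, F (G q) = q) := by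
  set e := Equiv.ofBijective F hbij with he
  have hlv : ∀ p, e.symm (F p) = p := fun p => e.symm_apply_apply p
  have hrv : ∀ q, F (e.symm q) = q := fun q => e.apply_symm_apply q
  refine ⟨e.symm, ?_, hlv, hrv⟩
  rw [continuous_iff_isClosed]
  intro s hs
  have : e.symm ⁻¹' s = F '' s := by
    ext q
    constructor
    · intro hq
      exact ⟨e.symm q, hq, hrv q⟩
    · rintro ⟨p, hp, rfl⟩
      rwa [Set.mem_preimage, hlv]
  rw [this]
  exact isClosedMap_realization hF hfib s hs

/-- the barycenter map from the subdivision. -/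
lemma exists_sMap {K : Set (Finset V)} (hK : Cx K) :
    ∃ S : Realization (sd K) → Realization K,
      Continuous S ∧ ∀ p, (S p).toFun = sMap0 p.toFun := by
  refine exists_realization_map sMap0 ?_ ?_
  · intro C hC
    obtain ⟨M, hM, hmax⟩ := chain_max hC.1 hC.2.2
    exact ⟨M, hC.2.1 hM, fun g hg => sMap0_mem hK hC hg hmax⟩
  · intro C _
    exact continuousOn_sMap0 C

lemma sMap0_pos {C : Finset (Finset V)} {g : Finset V → ℝ} (hg : g ∈ simplexCarrier C)
    {ρ : Finset V} (hρ : g ρ ≠ 0) {v : V} (hv : v ∈ ρ) : 0 < sMap0 g v := by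
  classical
  rw [sMap0_eq_rep (support_subset_of_mem hg)]
  have hρC : ρ ∈ C := by
    by_contra hc
    exact hρ (hg.2.1 ρ hc)
  have h1 : g ρ * weight ρ v ≤ rep g C v := by
    refine Finset.single_le_sum (f := fun τ => g τ * weight τ v) ?_ hρC
    intro τ _
    exact mul_nonneg (hg.1 τ) (weight_nonneg τ v)
  have h2 : 0 < g ρ * weight ρ v := by
    refine mul_pos (lt_of_le_of_ne (hg.1 ρ) (Ne.symm hρ)) ?_
    unfold weight
    rw [if_pos hv]
    have : 0 < ρ.card := Finset.card_pos.mpr ⟨v, hv⟩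
    positivity
  linarith

lemma sMap_fiber {K : Set (Finset V)} (hK : Cx K)
    {S : Realization (sd K) → Realization K} (hS : ∀ p, (S p).toFun = sMap0 p.toFun)
    {τ : Finset V} (hτ : τ ∈ K) :
    IsCompact (S ⁻¹' simplexSet K τ) := by
  classical
  have heq : S ⁻¹' simplexSet K τ =
      ⋃ D ∈ (τ.powerset.powerset.filter (fun D => D ∈ sd K) :
        Finset (Finset (Finset V))), simplexSet (sd K) D := by
    ext p
    simp only [Set.mem_preimage, Set.mem_iUnion, Finset.mem_filter, Finset.mem_powerset]
    constructor
    · intro hp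
      obtain ⟨C, hC, hgC⟩ := p.mem
      have hzero : ∀ ρ, p.toFun ρ ≠ 0 → ρ ⊆ τ := by
        intro ρ hρ v hv
        by_contra hvτ
        have hmem : (S p).toFun ∈ simplexCarrier τ := hp
        have h1 : (S p).toFun v = 0 := hmem.2.1 v hvτ
        have h2 : 0 < (S p).toFun v := by
          rw [hS p]
          exact sMap0_pos hgC hρ hv
        exact absurd h1 (ne_of_gt h2)
      set D := C.filter (fun ρ => p.toFun ρ ≠ 0) with hD
      have hDC : D ⊆ C := Finset.filter_subset _ _
      have hsum : ∑ ρ ∈ D, p.toFun ρ = 1 := by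
        rw [hD, Finset.sum_filter_of_ne (fun ρ _ h => h)]
        exact hgC.2.2
      refine ⟨D, ⟨⟨fun ρ hρ => Finset.mem_powerset.mpr
        (hzero ρ (Finset.mem_filter.mp hρ).2), ?_⟩, ?_⟩⟩
      · refine ⟨?_, fun ρ hρ => hC.2.1 (hDC hρ), hC.2.2.mono (fun ρ hρ => hDC hρ)⟩
        refine Finset.nonempty_of_sum_ne_zero (s := D) (f := fun ρ => p.toFun ρ) ?_
        rw [hsum]; norm_num
      · refine ⟨hgC.1, ?_, hsum⟩
        intro ρ hρ
        by_contra hne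
        have hρC : ρ ∈ C := by
          by_contra hCmem
          exact hne (hgC.2.1 ρ hCmem)
        exact hρ (Finset.mem_filter.mpr ⟨hρC, hne⟩)
    · rintro ⟨D, ⟨hDτ, hDK⟩, hpD⟩
      show (S p).toFun ∈ simplexCarrier τ
      rw [hS p]
      exact sMap0_mem hK hDK hpD (fun ρ hρ => Finset.mem_powerset.mp (hDτ hρ))
  rw [heq]
  refine (τ.powerset.powerset.filter (fun D => D ∈ sd K)).finite_toSet.isCompact_biUnion ?_
  intro D hD
  exact isCompact_simplexSet (Finset.mem_filter.mp hD).2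

end RipsPaper
namespace RipsPaper

universe x

variable {V : Type x}

lemma rep_pos {g : Finset V → ℝ} {D : Finset (Finset V)} (hg0 : ∀ τ, 0 ≤ g τ)
    (hsupp : ∀ τ, g τ ≠ 0 ↔ τ ∈ D) {ρ : Finset V} (hρ : ρ ∈ D) {v : V} (hv : v ∈ ρ) :
    0 < rep g D v := by
  classical
  have h1 : g ρ * weight ρ v ≤ rep g D v :=
    Finset.single_le_sum (f := fun τ => g τ * weight τ v)
      (fun τ _ => mul_nonneg (hg0 τ) (weight_nonneg τ v)) hρ
  have hgρ : 0 < g ρ := lt_of_le_of_ne (hg0 ρ) (Ne.symm ((hsupp ρ).mpr hρ))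
  have hw : 0 < weight ρ v := by
    unfold weight
    rw [if_pos hv]
    have : 0 < ρ.card := Finset.card_pos.mpr ⟨v, hv⟩
    positivity
  linarith [mul_pos hgρ hw]

lemma rep_eq_zero_of_not_mem {g : Finset V → ℝ} {D : Finset (Finset V)} {M : Finset V}
    (hmax : ∀ τ ∈ D, τ ⊆ M) {v : V} (hv : v ∉ M) : rep g D v = 0 :=
  Finset.sum_eq_zero fun τ hτ => by
    rw [weight_eq_zero (fun hvτ => hv (hmax τ hτ hvτ)), mul_zero]

lemma subdiv_unique :
    ∀ (n : ℕ) (g g' : Finset V → ℝ) (D D' : Finset (Finset V)),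
      D.card ≤ n →
      (∀ τ, 0 ≤ g τ) → (∀ τ, g τ ≠ 0 ↔ τ ∈ D) → (∀ τ ∈ D, τ.Nonempty) →
      IsChain (· ⊆ ·) (↑D : Set (Finset V)) →
      (∀ τ, 0 ≤ g' τ) → (∀ τ, g' τ ≠ 0 ↔ τ ∈ D') → (∀ τ ∈ D', τ.Nonempty) →
      IsChain (· ⊆ ·) (↑D' : Set (Finset V)) →
      rep g D = rep g' D' → g = g' := by
  intro n
  induction n with
  | zero =>
    intro g g' D D' hcard hg0 hgs hgne hgch hg'0 hg's hg'ne hg'ch hrep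
    have hD : D = ∅ := Finset.card_eq_zero.mp (Nat.le_zero.mp hcard)
    have hD' : D' = ∅ := by
      by_contra hne
      obtain ⟨M', hM', hmax'⟩ := chain_max (Finset.nonempty_iff_ne_empty.mpr hne) hg'ch
      obtain ⟨v, hv⟩ := hg'ne M' hM'
      have h1 : 0 < rep g' D' v := rep_pos hg'0 hg's hM' hv
      have h2 : rep g D v = 0 := by
        rw [hD]
        simp [rep]
      rw [hrep] at h2
      linarith
    funext τ
    have e1 : g τ = 0 := by
      by_contra h
      exact absurd ((hgs τ).mp h) (by simp [hD])
    have e2 : g' τ = 0 := by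
      by_contra h
      exact absurd ((hg's τ).mp h) (by simp [hD'])
    rw [e1, e2]
  | succ n ih =>
    intro g g' D D' hcard hg0 hgs hgne hgch hg'0 hg's hg'ne hg'ch hrep
    classical
    by_cases hD : D = ∅
    · have hD' : D' = ∅ := by
        by_contra hne
        obtain ⟨M', hM', hmax'⟩ := chain_max (Finset.nonempty_iff_ne_empty.mpr hne) hg'ch
        obtain ⟨v, hv⟩ := hg'ne M' hM'
        have h1 : 0 < rep g' D' v := rep_pos hg'0 hg's hM' hv
        have h2 : rep g D v = 0 := by
          rw [hD]
          simp [rep]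
        rw [hrep] at h2
        linarith
      funext τ
      have e1 : g τ = 0 := by
        by_contra h
        exact absurd ((hgs τ).mp h) (by simp [hD])
      have e2 : g' τ = 0 := by
        by_contra h
        exact absurd ((hg's τ).mp h) (by simp [hD'])
      rw [e1, e2]
    · have hDne : D.Nonempty := Finset.nonempty_iff_ne_empty.mpr hD
      obtain ⟨M, hM, hmax⟩ := chain_max hDne hgch
      have hD'ne : D'.Nonempty := by
        by_contra hne
        obtain ⟨v, hv⟩ := hgne M hM
        have h1 : 0 < rep g D v := rep_pos hg0 hgs hM hv
        have h2 : rep g' D' v = 0 := by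
          rw [Finset.not_nonempty_iff_eq_empty.mp hne]
          simp [rep]
        rw [hrep] at h1
        linarith
      obtain ⟨M', hM', hmax'⟩ := chain_max hD'ne hg'ch
      have hMM' : M = M' := by
        apply Finset.coe_injective
        ext v
        constructor
        · intro hv
          by_contra hv'
          have h1 : 0 < rep g D v := rep_pos hg0 hgs hM hv
          have h2 : rep g' D' v = 0 := rep_eq_zero_of_not_mem hmax' hv'
          rw [hrep] at h1
          linarith
        · intro hv
          by_contra hv'
          have h1 : 0 < rep g' D' v := rep_pos hg'0 hg's hM' hv
          have h2 : rep g D v = 0 := rep_eq_zero_of_not_mem hmax hv'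
          rw [hrep] at h2
          linarith
      subst hMM'
      -- a vertex of M not covered by the rest of the chain
      have hvex : ∀ (h : Finset V → ℝ) (E : Finset (Finset V)), (∀ τ, h τ ≠ 0 ↔ τ ∈ E) →
          IsChain (· ⊆ ·) (↑E : Set (Finset V)) → M ∈ E → (∀ τ ∈ E, τ ⊆ M) → M.Nonempty →
          ∃ v ∈ M, rep h E v = h M * weight M v := by
        intro h E hsupp hch hME hmaxE hMne
        by_cases he : E.erase M = ∅
        · obtain ⟨v, hv⟩ := hMne
          refine ⟨v, hv, ?_⟩
          have hE : E = {M} := by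
            apply Finset.eq_singleton_iff_unique_mem.mpr
            refine ⟨hME, fun τ hτ => ?_⟩
            by_contra hne
            exact absurd (Finset.mem_erase.mpr ⟨hne, hτ⟩) (by simp [he])
          rw [hE, rep, Finset.sum_singleton]
        · obtain ⟨M₂, hM₂, hmax₂⟩ := chain_max (Finset.nonempty_iff_ne_empty.mpr he)
            (hch.mono (fun τ hτ => Finset.mem_coe.mpr (Finset.mem_of_mem_erase
              (Finset.mem_coe.mp hτ))))
          have hM₂M : M₂ ⊂ M := by
            refine Finset.ssubset_iff_subset_ne.mpr ⟨hmaxE M₂ (Finset.mem_of_mem_erase hM₂), ?_⟩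
            exact (Finset.mem_erase.mp hM₂).1
          obtain ⟨v, hvM, hvM₂⟩ := Finset.exists_of_ssubset hM₂M
          refine ⟨v, hvM, ?_⟩
          rw [rep, ← Finset.sum_erase_add E _ hME]
          have hz : ∑ τ ∈ E.erase M, h τ * weight τ v = 0 := by
            refine Finset.sum_eq_zero fun τ hτ => ?_
            rw [weight_eq_zero (fun hvτ => hvM₂ (hmax₂ τ hτ hvτ)), mul_zero]
          rw [hz, zero_add]
      have hMne : M.Nonempty := hgne M hM
      obtain ⟨v₁, hv₁, he₁⟩ := hvex g D hgs hgch hM hmax hMne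
      obtain ⟨v₂, hv₂, he₂⟩ := hvex g' D' hg's hg'ch hM' hmax' hMne
      have hwpos : 0 < weight M v₁ := by
        unfold weight
        rw [if_pos hv₁]
        have : 0 < M.card := Finset.card_pos.mpr ⟨v₁, hv₁⟩
        positivity
      have hweq : ∀ v ∈ M, weight M v = weight M v₁ := by
        intro v hv
        unfold weight
        rw [if_pos hv, if_pos hv₁]
      -- g M = g' M
      have hgM : g M = g' M := by
        have hb1 : g' M * weight M v₁ ≤ rep g' D' v₁ := by
          refine Finset.single_le_sum (f := fun τ => g' τ * weight τ v₁)
            (fun τ _ => mul_nonneg (hg'0 τ) (weight_nonneg τ v₁)) hM'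
        have hb2 : g M * weight M v₂ ≤ rep g D v₂ := by
          refine Finset.single_le_sum (f := fun τ => g τ * weight τ v₂)
            (fun τ _ => mul_nonneg (hg0 τ) (weight_nonneg τ v₂)) hM
        rw [hrep] at he₁ hb2
        rw [hweq v₂ hv₂] at hb2 he₂
        rw [hweq v₁ hv₁] at hb1 he₁
        have l1 : g' M * weight M v₁ ≤ g M * weight M v₁ := he₁ ▸ hb1
        have l2 : g M * weight M v₁ ≤ g' M * weight M v₁ := he₂ ▸ hb2
        have := le_antisymm l2 l1
        exact mul_right_cancel₀ (ne_of_gt hwpos) this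
      -- update and recurse
      set h := Function.update g M 0 with hh
      set h' := Function.update g' M 0 with hh'
      have hrep2 : rep h (D.erase M) = rep h' (D'.erase M) := by
        funext v
        have e1 : rep h (D.erase M) v = rep g D v - g M * weight M v := by
          rw [rep, rep, ← Finset.sum_erase_add D _ hM]
          have : ∑ τ ∈ D.erase M, h τ * weight τ v = ∑ τ ∈ D.erase M, g τ * weight τ v :=
            Finset.sum_congr rfl fun τ hτ => by
              rw [hh, Function.update_of_ne (Finset.mem_erase.mp hτ).1]
          rw [this]
          ring
        have e2 : rep h' (D'.erase M) v = rep g' D' v - g' M * weight M v := by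
          rw [rep, rep, ← Finset.sum_erase_add D' _ hM']
          have : ∑ τ ∈ D'.erase M, h' τ * weight τ v = ∑ τ ∈ D'.erase M, g' τ * weight τ v :=
            Finset.sum_congr rfl fun τ hτ => by
              rw [hh', Function.update_of_ne (Finset.mem_erase.mp hτ).1]
          rw [this]
          ring
        rw [e1, e2, hrep, hgM]
      have hcard2 : (D.erase M).card ≤ n := by
        rw [Finset.card_erase_of_mem hM]
        omega
      have hires := ih h h' (D.erase M) (D'.erase M) hcard2
        (fun τ => by
          rw [hh]
          rcases eq_or_ne τ M with rfl | hne
          · rw [Function.update_self]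
          · rw [Function.update_of_ne hne]; exact hg0 τ)
        (fun τ => by
          rcases eq_or_ne τ M with rfl | hne
          · rw [hh, Function.update_self]
            simp
          · rw [hh, Function.update_of_ne hne]
            rw [hgs τ, Finset.mem_erase]
            exact ⟨fun h => ⟨hne, h⟩, fun h => h.2⟩)
        (fun τ hτ => hgne τ (Finset.mem_of_mem_erase hτ))
        (hgch.mono (fun τ hτ => Finset.mem_coe.mpr (Finset.mem_of_mem_erase (Finset.mem_coe.mp hτ))))
        (fun τ => by
          rw [hh']
          rcases eq_or_ne τ M with rfl | hne
          · rw [Function.update_self]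
          · rw [Function.update_of_ne hne]; exact hg'0 τ)
        (fun τ => by
          rcases eq_or_ne τ M with rfl | hne
          · rw [hh', Function.update_self]
            simp
          · rw [hh', Function.update_of_ne hne]
            rw [hg's τ, Finset.mem_erase]
            exact ⟨fun h => ⟨hne, h⟩, fun h => h.2⟩)
        (fun τ hτ => hg'ne τ (Finset.mem_of_mem_erase hτ))
        (hg'ch.mono (fun τ hτ => Finset.mem_coe.mpr (Finset.mem_of_mem_erase (Finset.mem_coe.mp hτ))))
        hrep2
      funext τ
      rcases eq_or_ne τ M with rfl | hne
      · rw [hgM]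
      · have : h τ = h' τ := congrFun hires τ
        rwa [hh, hh', Function.update_of_ne hne, Function.update_of_ne hne] at this

end RipsPaper
namespace RipsPaper

universe x

variable {V : Type x}

lemma subdiv_exists {K : Set (Finset V)} (hK : Cx K) :
    ∀ (n : ℕ) (σ : Finset V), σ.card ≤ n → σ ∈ K → ∀ f : V → ℝ,
      (∀ v, 0 ≤ f v) → (∀ v, v ∉ σ → f v = 0) → (∀ v ∈ σ, 0 < f v) →
      ∃ g : Finset V → ℝ, (∀ τ, 0 ≤ g τ) ∧ (∀ τ, g τ ≠ 0 → τ ∈ K ∧ τ ⊆ σ) ∧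
        IsChain (· ⊆ ·) (Function.support g) ∧ ∀ v, rep g σ.powerset v = f v := by
  intro n
  induction n with
  | zero =>
    intro σ hcard hσ f _ _ _
    obtain ⟨v, hv⟩ := hK.1 σ hσ
    have := Finset.card_pos.mpr ⟨v, hv⟩
    omega
  | succ n ih =>
    intro σ hcard hσ f hf0 hfz hfpos
    classical
    have hne : σ.Nonempty := hK.1 σ hσ
    set m := σ.inf' hne f with hm
    obtain ⟨v₀, hv₀, hv₀e⟩ := Finset.exists_mem_eq_inf' hne f
    have hmpos : 0 < m := by rw [hm, hv₀e]; exact hfpos v₀ hv₀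
    have hmle : ∀ v ∈ σ, m ≤ f v := fun v hv => Finset.inf'_le f hv
    set f' := fun v => if v ∈ σ then f v - m else 0 with hf'
    set σ' := σ.filter (fun v => f' v ≠ 0) with hσ'
    have hσ'sub : σ' ⊆ σ := Finset.filter_subset _ _
    have hf'v₀ : f' v₀ = 0 := by
      rw [hf']
      simp only [if_pos hv₀]
      rw [← hv₀e, hm]
      ring
    have hv₀not : v₀ ∉ σ' := by
      rw [hσ', Finset.mem_filter]
      push_neg
      intro _
      simpa using hf'v₀
    set c := m * σ.card with hc
    have hcpos : 0 < c := by
      have : 0 < σ.card := Finset.card_pos.mpr hne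
      rw [hc]; positivity
    have hwσ : ∀ v, c * weight σ v = if v ∈ σ then m else 0 := by
      intro v
      unfold weight
      by_cases hv : v ∈ σ
      · rw [if_pos hv, if_pos hv, hc, mul_assoc, mul_inv_cancel₀, mul_one]
        exact_mod_cast Finset.card_ne_zero_of_mem hv
      · rw [if_neg hv, if_neg hv, mul_zero]
    by_cases hmt : σ' = ∅
    · have hconst : ∀ v ∈ σ, f v = m := by
        intro v hv
        have := Finset.filter_eq_empty_iff.mp hmt hv
        push_neg at this
        have : f' v = 0 := this
        rw [hf'] at this
        simp only [if_pos hv] at this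
        linarith
      refine ⟨fun τ => if τ = σ then c else 0, ?_, ?_, ?_, ?_⟩
      · intro τ
        dsimp only
        split
        · linarith
        · exact le_refl 0
      · intro τ hτ
        dsimp only at hτ
        by_cases hts : τ = σ
        · subst hts
          exact ⟨hσ, Finset.Subset.refl τ⟩
        · simp [hts] at hτ
      · intro a ha b hb hab
        have ha' : a = σ := by
          by_contra h
          simp [Function.mem_support, h] at ha
        have hb' : b = σ := by
          by_contra h
          simp [Function.mem_support, h] at hb
        exact absurd (ha'.trans hb'.symm) hab
      · intro v
        unfold rep
        have hcongr : ∀ τ ∈ σ.powerset, (if τ = σ then c else 0) * weight τ v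
            = if τ = σ then c * weight σ v else 0 := by
          intro τ _
          by_cases hts : τ = σ
          · subst hts; rw [if_pos rfl, if_pos rfl]
          · rw [if_neg hts, if_neg hts, zero_mul]
        rw [Finset.sum_congr rfl hcongr, Finset.sum_ite_eq' σ.powerset σ
          (fun _ => c * weight σ v), if_pos (Finset.mem_powerset_self σ), hwσ]
        by_cases hv : v ∈ σ
        · rw [if_pos hv, hconst v hv]
        · rw [if_neg hv, hfz v hv]
    · have hσ'ne : σ'.Nonempty := Finset.nonempty_iff_ne_empty.mpr hmt
      have hσ'K : σ' ∈ K := hK.2 σ hσ σ' hσ'sub hσ'ne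
      have hcard' : σ'.card ≤ n := by
        have hlt : σ'.card < σ.card := Finset.card_lt_card
          ⟨hσ'sub, fun hss => hv₀not (hss hv₀)⟩
        omega
      have hf'0 : ∀ v, 0 ≤ f' v := by
        intro v
        simp only [hf']
        split
        · rename_i hv
          linarith [hmle v hv]
        · exact le_refl 0
      have hf'z : ∀ v, v ∉ σ' → f' v = 0 := by
        intro v hv
        by_cases hvσ : v ∈ σ
        · by_contra h
          exact hv (Finset.mem_filter.mpr ⟨hvσ, h⟩)
        · simp only [hf', if_neg hvσ]
      have hf'pos : ∀ v ∈ σ', 0 < f' v := by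
        intro v hv
        exact lt_of_le_of_ne (hf'0 v) (Ne.symm (Finset.mem_filter.mp hv).2)
      obtain ⟨g', hg'0, hg'supp, hg'ch, hg'rep⟩ := ih σ' hcard' hσ'K f' hf'0 hf'z hf'pos
      refine ⟨fun τ => g' τ + if τ = σ then c else 0, ?_, ?_, ?_, ?_⟩
      · intro τ
        have := hg'0 τ
        dsimp only
        split <;> linarith
      · intro τ hτ
        dsimp only at hτ
        by_cases hts : τ = σ
        · subst hts
          exact ⟨hσ, Finset.Subset.refl τ⟩
        · have hg : g' τ ≠ 0 := by
            intro h0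
            rw [h0, if_neg hts, add_zero] at hτ
            exact hτ rfl
          exact ⟨(hg'supp τ hg).1, (hg'supp τ hg).2.trans hσ'sub⟩
      · have hmem : ∀ τ : Finset V, (g' τ + if τ = σ then c else 0) ≠ 0 →
            g' τ ≠ 0 ∨ τ = σ := by
          intro τ h
          by_cases hts : τ = σ
          · exact Or.inr hts
          · rw [if_neg hts, add_zero] at h
            exact Or.inl h
        intro a ha b hb hab
        rcases hmem a ha with hag | rfl
        · rcases hmem b hb with hbg | rfl
          · exact hg'ch hag hbg hab
          · exact Or.inl ((hg'supp a hag).2.trans hσ'sub)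
        · rcases hmem b hb with hbg | rfl
          · exact Or.inr ((hg'supp b hbg).2.trans hσ'sub)
          · exact absurd rfl hab
      · intro v
        unfold rep
        have hsplit : ∑ τ ∈ σ.powerset, (g' τ + if τ = σ then c else 0) * weight τ v
            = (∑ τ ∈ σ.powerset, g' τ * weight τ v)
              + (∑ τ ∈ σ.powerset, (if τ = σ then c else 0) * weight τ v) := by
          rw [← Finset.sum_add_distrib]
          exact Finset.sum_congr rfl fun τ _ => add_mul _ _ _
        have h1 : ∑ τ ∈ σ.powerset, g' τ * weight τ v = rep g' σ'.powerset v := by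
          unfold rep
          symm
          refine Finset.sum_subset (Finset.powerset_mono.mpr hσ'sub) ?_
          intro τ hτ hτ'
          by_cases h0 : g' τ = 0
          · rw [h0, zero_mul]
          · exact absurd (Finset.mem_powerset.mpr (hg'supp τ h0).2) hτ'
        have h2 : ∑ τ ∈ σ.powerset, (if τ = σ then c else 0) * weight τ v
            = if v ∈ σ then m else 0 := by
          have hcongr : ∀ τ ∈ σ.powerset, (if τ = σ then c else 0) * weight τ v
              = if τ = σ then c * weight σ v else 0 := by
            intro τ _
            by_cases hts : τ = σ
            · subst hts; rw [if_pos rfl, if_pos rfl]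
            · rw [if_neg hts, if_neg hts, zero_mul]
          rw [Finset.sum_congr rfl hcongr, Finset.sum_ite_eq' σ.powerset σ
            (fun _ => c * weight σ v), if_pos (Finset.mem_powerset_self σ), hwσ]
        rw [hsplit, h1, h2, hg'rep v]
        by_cases hv : v ∈ σ
        · rw [if_pos hv]
          simp only [hf', if_pos hv]
          ring
        · rw [if_neg hv, hfz v hv, hf'z v (fun hc' => hv (hσ'sub hc')), zero_add]

lemma sMap_bijective {K : Set (Finset V)} (hK : Cx K)
    {S : Realization (sd K) → Realization K} (hS : ∀ p, (S p).toFun = sMap0 p.toFun) :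
    Function.Bijective S := by
  classical
  constructor
  · -- injectivity
    intro p p' hpp
    obtain ⟨C, hC, hgC⟩ := p.mem
    obtain ⟨C', hC', hgC'⟩ := p'.mem
    set g := p.toFun with hg
    set g' := p'.toFun with hg'
    set D := C.filter (fun τ => g τ ≠ 0) with hD
    set D' := C'.filter (fun τ => g' τ ≠ 0) with hD'
    have hDs : ∀ τ, g τ ≠ 0 ↔ τ ∈ D := by
      intro τ
      rw [hD, Finset.mem_filter]
      refine ⟨fun h => ⟨?_, h⟩, fun h => h.2⟩
      by_contra hc
      exact h (hgC.2.1 τ hc)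
    have hD's : ∀ τ, g' τ ≠ 0 ↔ τ ∈ D' := by
      intro τ
      rw [hD', Finset.mem_filter]
      refine ⟨fun h => ⟨?_, h⟩, fun h => h.2⟩
      by_contra hc
      exact h (hgC'.2.1 τ hc)
    have hrepD : ∀ (h : Finset V → ℝ) (E F : Finset (Finset V)), F = E.filter (fun τ => h τ ≠ 0) →
        rep h E = rep h F := by
      intro h E F hF
      funext v
      rw [hF]
      unfold rep
      rw [Finset.sum_filter_of_ne]
      intro τ _ hne
      exact left_ne_zero_of_mul hne
    have heq : rep g D = rep g' D' := by
      have e1 : sMap0 g = rep g D := by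
        rw [sMap0_eq_rep (support_subset_of_mem hgC), hrepD g C D hD]
      have e2 : sMap0 g' = rep g' D' := by
        rw [sMap0_eq_rep (support_subset_of_mem hgC'), hrepD g' C' D' hD']
      rw [← e1, ← e2]
      rw [← hS p, ← hS p', hpp]
    apply Realization.ext'
    exact subdiv_unique D.card g g' D D' (le_refl _) hgC.1 hDs
      (fun τ hτ => hK.1 τ (hC.2.1 ((Finset.filter_subset _ _) hτ)))
      (hC.2.2.mono (fun τ hτ => (Finset.filter_subset _ _) hτ))
      hgC'.1 hD's
      (fun τ hτ => hK.1 τ (hC'.2.1 ((Finset.filter_subset _ _) hτ)))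
      (hC'.2.2.mono (fun τ hτ => (Finset.filter_subset _ _) hτ))
      heq
  · -- surjectivity
    intro q
    obtain ⟨σ₀, hσ₀, hf₀⟩ := q.mem
    set f := q.toFun with hf
    set σ := σ₀.filter (fun v => f v ≠ 0) with hσdef
    have hσsub : σ ⊆ σ₀ := Finset.filter_subset _ _
    have hσne : σ.Nonempty := by
      obtain ⟨v, hv, hvne⟩ := Finset.exists_ne_zero_of_sum_ne_zero
        (hf₀.2.2.symm ▸ one_ne_zero)
      exact ⟨v, Finset.mem_filter.mpr ⟨hv, hvne⟩⟩
    have hσK : σ ∈ K := hK.2 σ₀ hσ₀ σ hσsub hσne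
    have hfz : ∀ v, v ∉ σ → f v = 0 := by
      intro v hv
      by_cases hvσ₀ : v ∈ σ₀
      · by_contra h
        exact hv (Finset.mem_filter.mpr ⟨hvσ₀, h⟩)
      · exact hf₀.2.1 v hvσ₀
    have hfpos : ∀ v ∈ σ, 0 < f v :=
      fun v hv => lt_of_le_of_ne (hf₀.1 v) (Ne.symm (Finset.mem_filter.mp hv).2)
    obtain ⟨g, hg0, hgsupp, hgch, hgrep⟩ :=
      subdiv_exists hK σ.card σ (le_refl _) hσK f hf₀.1 hfz hfpos
    set C := σ.powerset.filter (fun τ => g τ ≠ 0) with hC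
    have hCsupp : ∀ τ, g τ ≠ 0 ↔ τ ∈ C := by
      intro τ
      rw [hC, Finset.mem_filter, Finset.mem_powerset]
      exact ⟨fun h => ⟨(hgsupp τ h).2, h⟩, fun h => h.2⟩
    have hsupset : Function.support g ⊆ ↑σ.powerset := by
      intro τ hτ
      simpa using (hgsupp τ hτ).2
    have hfsum : ∑ v ∈ σ, f v = 1 := by
      rw [← hf₀.2.2]
      symm
      refine (Finset.sum_subset hσsub ?_).symm
      intro v hv hv'
      exact hfz v hv'
    have hgsum : ∑ τ ∈ C, g τ = 1 := by
      have h1 : ∑ v ∈ σ, rep g σ.powerset v = 1 := by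
        rw [Finset.sum_congr rfl (fun v _ => hgrep v), hfsum]
      rw [sum_rep (fun τ _ h0 => ⟨hK.1 τ (hgsupp τ h0).1, (hgsupp τ h0).2⟩)] at h1
      rw [← h1]
      refine Finset.sum_subset ?_ ?_
      · rw [hC]
        exact Finset.filter_subset _ _
      · intro τ _ hτ'
        by_contra h0
        exact hτ' ((hCsupp τ).mp h0)
    have hCK : C ∈ sd K := by
      refine ⟨?_, ?_, ?_⟩
      · refine Finset.nonempty_of_sum_ne_zero (f := g) ?_
        rw [hgsum]; norm_num
      · intro τ hτ
        exact (hgsupp τ ((hCsupp τ).mpr (Finset.mem_coe.mp hτ))).1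
      · exact hgch.mono (fun τ hτ => (hCsupp τ).mpr (Finset.mem_coe.mp hτ))
    have hgmem : g ∈ simplexCarrier C := by
      refine ⟨hg0, ?_, hgsum⟩
      intro τ hτ
      by_contra h0
      exact hτ ((hCsupp τ).mp h0)
    refine ⟨⟨g, C, hCK, hgmem⟩, ?_⟩
    apply Realization.ext'
    show (S ⟨g, C, hCK, hgmem⟩).toFun = f
    rw [hS]
    show sMap0 g = f
    funext v
    rw [sMap0_eq_rep hsupset]
    exact hgrep v

end RipsPaper
namespace RipsPaper

open Function
open scoped Classical

universe x y

variable {V : Type x} {W : Type y}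

lemma FnHomotopic.congr' {X Y : Type*} [TopologicalSpace X] [TopologicalSpace Y]
    {f g f' g' : X → Y} (h : FnHomotopic f g) (hf : f = f') (hg : g = g') :
    FnHomotopic f' g' := hf ▸ hg ▸ h

/-- realization map induced by a vertex map. -/
lemma exists_vertex_map {K : Set (Finset V)} {L : Set (Finset W)} (h : V → W)
    (hsimp : ∀ σ ∈ K, ∃ τ ∈ L, ∀ v ∈ σ, h v ∈ τ) :
    ∃ F : Realization K → Realization L,
      Continuous F ∧ ∀ p : Realization K, (F p).toFun = vMap0 h p.toFun := by
  refine exists_realization_map (vMap0 h) ?_ ?_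
  · intro σ hσ
    obtain ⟨τ, hτ, hv⟩ := hsimp σ hσ
    exact ⟨τ, hτ, fun f hf => vMap0_mem hf hv⟩
  · intro σ _
    exact continuousOn_vMap0 h σ

/-- the subdivision pair: barycenter homeomorphism and its inverse. -/
lemma exists_sPair {K : Set (Finset V)} (hK : Cx K) :
    ∃ (S : Realization (sd K) → Realization K) (G : Realization K → Realization (sd K)),
      Continuous S ∧ Continuous G ∧ (∀ p, (S p).toFun = sMap0 p.toFun) ∧
      (∀ p, G (S p) = p) ∧ (∀ q, S (G q) = q) := by
  obtain ⟨S, hSc, hSf⟩ := exists_sMap hK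
  obtain ⟨G, hGc, hGS, hSG⟩ := exists_continuous_inverse hSc (sMap_bijective hK hSf)
    (fun τ hτ => sMap_fiber hK hSf hτ)
  exact ⟨S, G, hSc, hGc, hSf, hGS, hSG⟩

/-- the Dowker complex of a relation. -/
def dK (R : V → W → Prop) : Set (Finset V) :=
  {σ | σ.Nonempty ∧ ∃ b, ∀ a ∈ σ, R a b}

lemma cx_dK (R : V → W → Prop) : Cx (dK R) := by
  constructor
  · exact fun σ hσ => hσ.1
  · rintro σ ⟨hne, b, hb⟩ τ hτσ hτne
    exact ⟨hτne, b, fun a ha => hb a (hτσ ha)⟩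

/-- selection of a common witness for a simplex. -/
noncomputable def bsel (R : V → W → Prop) [Nonempty W] (σ : Finset V) : W := by
  classical
  exact if h : ∃ b, ∀ a ∈ σ, R a b then h.choose else Classical.arbitrary W

lemma bsel_spec {R : V → W → Prop} [Nonempty W] {σ : Finset V} (hσ : σ ∈ dK R) :
    ∀ a ∈ σ, R a (bsel R σ) := by
  obtain ⟨-, hex⟩ := hσ
  unfold bsel
  rw [dif_pos hex]
  exact hex.choose_spec

/-- selection of a common vertex of a chain. -/
noncomputable def asel [Nonempty V] (C : Finset (Finset V)) : V := by
  classical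
  exact if h : ∃ a, ∀ τ ∈ C, a ∈ τ then h.choose else Classical.arbitrary V

lemma asel_spec [Nonempty V] {K : Set (Finset V)} (hK : Cx K) {C : Finset (Finset V)}
    (hC : C ∈ sd K) : ∀ τ ∈ C, asel C ∈ τ := by
  obtain ⟨m, hm, hmin⟩ := chain_min hC.1 hC.2.2
  obtain ⟨a, ha⟩ := hK.1 m (hC.2.1 hm)
  have hex : ∃ a, ∀ τ ∈ C, a ∈ τ := ⟨a, fun τ hτ => hmin τ hτ ha⟩
  unfold asel
  rw [dif_pos hex]
  exact hex.choose_spec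

lemma image_mem_flip {R : V → W → Prop} [Nonempty W] {C : Finset (Finset V)}
    (hC : C ∈ sd (dK R)) : C.image (bsel R) ∈ dK (flip R) := by
  classical
  obtain ⟨m, hm, hmin⟩ := chain_min hC.1 hC.2.2
  obtain ⟨a, ha⟩ := (cx_dK R).1 m (hC.2.1 hm)
  refine ⟨hC.1.image _, a, ?_⟩
  intro b hb
  obtain ⟨σ, hσ, rfl⟩ := Finset.mem_image.mp hb
  exact bsel_spec (hC.2.1 hσ) a (hmin σ hσ ha)

lemma sdphi_simplicial {R : V → W → Prop} [Nonempty W] {S : Finset (Finset (Finset V))}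
    (hS : S ∈ sd (sd (dK R))) :
    S.image (fun C => C.image (bsel R)) ∈ sd (dK (flip R)) := by
  classical
  refine ⟨hS.1.image _, ?_, ?_⟩
  · intro τ hτ
    obtain ⟨C, hC, rfl⟩ := Finset.mem_image.mp (Finset.mem_coe.mp hτ)
    exact image_mem_flip (hS.2.1 hC)
  · rw [Finset.coe_image]
    refine IsChain.image_of_map_rel _ _ _ ?_ hS.2.2
    intro C C' hCC'
    exact Finset.image_subset_image hCC'

end RipsPaper
namespace RipsPaper

open Function
open scoped Classical

universe x y

variable {V : Type x} {W : Type y}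

/-- `F` is a standard Dowker map built from the barycentric inverse and the selection
vertex map. -/
def IsStd (R : V → W → Prop) [Nonempty W]
    (F : Realization (dK R) → Realization (dK (flip R))) : Prop :=
  Continuous F ∧
  ∃ (S : Realization (sd (dK R)) → Realization (dK R))
    (G : Realization (dK R) → Realization (sd (dK R))),
    Continuous S ∧ Continuous G ∧ (∀ p, (S p).toFun = sMap0 p.toFun) ∧
    (∀ p, G (S p) = p) ∧ (∀ q, S (G q) = q) ∧
    (∀ q, (F q).toFun = vMap0 (bsel R) (G q).toFun)

lemma isStd_exists (R : V → W → Prop) [Nonempty W] : ∃ F, IsStd R F := by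
  obtain ⟨S, G, hSc, hGc, hSf, hGS, hSG⟩ := exists_sPair (cx_dK R)
  obtain ⟨Φ, hΦc, hΦf⟩ := exists_vertex_map (K := sd (dK R)) (L := dK (flip R)) (bsel R)
    (fun C hC => ⟨C.image (bsel R), image_mem_flip hC,
      fun σ hσ => Finset.mem_image_of_mem _ hσ⟩)
  exact ⟨Φ ∘ G, hΦc.comp hGc, S, G, hSc, hGc, hSf, hGS, hSG, fun q => hΦf (G q)⟩

lemma isStd_htpy (R : V → W → Prop) [Nonempty V] [Nonempty W]
    {F : Realization (dK R) → Realization (dK (flip R))}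
    {G : Realization (dK (flip R)) → Realization (dK R)}
    (hF : IsStd R F) (hG : IsStd (flip R) G) : FnHomotopic (G ∘ F) id := by
  obtain ⟨hFc, S1, G1, hS1c, hG1c, hS1f, hG1S1, hS1G1, hFf⟩ := hF
  obtain ⟨hGc, SL, Gd, hSLc, hGLc, hSLf, hGLSL, hSLGL, hGf⟩ := hG
  have hcxK : Cx (dK R) := cx_dK R
  have hcxsd : Cx (sd (dK R)) := sd_cx hcxK
  have hcxL : Cx (dK (flip R)) := cx_dK (flip R)
  obtain ⟨S2, G2, hS2c, hG2c, hS2f, hG2S2, hS2G2⟩ := exists_sPair hcxsd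
  obtain ⟨sdΦ, hsdΦc, hsdΦf⟩ := exists_vertex_map (K := sd (sd (dK R)))
    (L := sd (dK (flip R))) (fun C => C.image (bsel R))
    (fun S hS => ⟨S.image (fun C => C.image (bsel R)), sdphi_simplicial hS,
      fun C hC => Finset.mem_image_of_mem _ hC⟩)
  have hDsimp : ∀ S ∈ sd (sd (dK R)), ∃ τ ∈ dK R, ∀ C ∈ S, asel C ∈ τ := by
    intro S hS
    obtain ⟨Cm, hCm, hCmmax⟩ := chain_max hS.1 hS.2.2
    obtain ⟨σm, hσm, hσmmax⟩ := chain_max (hS.2.1 hCm).1 (hS.2.1 hCm).2.2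
    refine ⟨σm, (hS.2.1 hCm).2.1 hσm, ?_⟩
    intro C hC
    obtain ⟨ρ, hρ⟩ := (hS.2.1 hC).1
    exact hσmmax ρ ((hCmmax C hC) hρ) (asel_spec hcxK (hS.2.1 hC) ρ hρ)
  obtain ⟨Dm, hDmc, hDmf⟩ := exists_vertex_map (K := sd (sd (dK R))) (L := dK R)
    asel hDsimp
  -- homotopy (A)
  have hA : FnHomotopic (F ∘ S1 ∘ S2) (SL ∘ sdΦ) := by
    refine fnHomotopic_of_carrier ((hFc.comp hS1c).comp hS2c) (hSLc.comp hsdΦc) ?_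
    intro S hS
    obtain ⟨Cm, hCm, hCmmax⟩ := chain_max hS.1 hS.2.2
    refine ⟨Cm.image (bsel R), image_mem_flip (hS.2.1 hCm), ?_⟩
    intro p hp
    have h2 : (S2 p).toFun ∈ simplexCarrier Cm := by
      rw [hS2f]
      exact sMap0_mem hcxsd hS hp hCmmax
    constructor
    · show (F (S1 (S2 p))).toFun ∈ _
      rw [hFf, hG1S1]
      exact vMap0_mem h2 (fun C hC => Finset.mem_image_of_mem _ hC)
    · show (SL (sdΦ p)).toFun ∈ _
      rw [hSLf]
      have h3 : (sdΦ p).toFun ∈ simplexCarrier (S.image (fun C => C.image (bsel R))) := by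
        rw [hsdΦf]
        exact vMap0_mem hp (fun C hC => Finset.mem_image_of_mem _ hC)
      refine sMap0_mem hcxL (sdphi_simplicial hS) h3 ?_
      intro ρ hρ
      obtain ⟨C, hC, rfl⟩ := Finset.mem_image.mp hρ
      exact Finset.image_subset_image (hCmmax C hC)
  -- homotopy (B1)
  have hB1 : FnHomotopic (G ∘ SL ∘ sdΦ) Dm := by
    refine fnHomotopic_of_carrier ((hGc.comp hSLc).comp hsdΦc) hDmc ?_
    intro S hS
    obtain ⟨C0, hC0, hC0min⟩ := chain_min hS.1 hS.2.2
    obtain ⟨μ, hμ, hμmin⟩ := chain_min (hS.2.1 hC0).1 (hS.2.1 hC0).2.2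
    have hμK : μ ∈ dK R := (hS.2.1 hC0).2.1 hμ
    refine ⟨S.image (fun C => bsel (flip R) (C.image (bsel R))) ∪ S.image asel, ?_, ?_⟩
    · obtain ⟨C, hC⟩ := hS.1
      refine ⟨⟨asel C, Finset.mem_union_right _ (Finset.mem_image_of_mem _ hC)⟩,
        bsel R μ, ?_⟩
      intro a ha
      rw [Finset.mem_union] at ha
      rcases ha with ha | ha
      · obtain ⟨C, hC, rfl⟩ := Finset.mem_image.mp ha
        have hCL : C.image (bsel R) ∈ dK (flip R) := image_mem_flip (hS.2.1 hC)
        exact bsel_spec (R := flip R) hCL (bsel R μ)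
          (Finset.mem_image_of_mem _ ((hC0min C hC) hμ))
      · obtain ⟨C, hC, rfl⟩ := Finset.mem_image.mp ha
        exact bsel_spec hμK _ (asel_spec hcxK (hS.2.1 hC) μ ((hC0min C hC) hμ))
    · intro p hp
      have h3 : (sdΦ p).toFun ∈ simplexCarrier (S.image (fun C => C.image (bsel R))) := by
        rw [hsdΦf]
        exact vMap0_mem hp (fun C hC => Finset.mem_image_of_mem _ hC)
      constructor
      · show (G (SL (sdΦ p))).toFun ∈ _
        rw [hGf, hGLSL]
        refine vMap0_mem h3 ?_
        intro ρ hρ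
        obtain ⟨C, hC, rfl⟩ := Finset.mem_image.mp hρ
        exact Finset.mem_union_left _ (Finset.mem_image_of_mem _ hC)
      · show (Dm p).toFun ∈ _
        rw [hDmf]
        exact vMap0_mem hp
          (fun C hC => Finset.mem_union_right _ (Finset.mem_image_of_mem _ hC))
  -- homotopy (B2)
  have hB2 : FnHomotopic Dm (S1 ∘ S2) := by
    refine fnHomotopic_of_carrier hDmc (hS1c.comp hS2c) ?_
    intro S hS
    obtain ⟨Cm, hCm, hCmmax⟩ := chain_max hS.1 hS.2.2
    obtain ⟨σm, hσm, hσmmax⟩ := chain_max (hS.2.1 hCm).1 (hS.2.1 hCm).2.2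
    refine ⟨σm, (hS.2.1 hCm).2.1 hσm, ?_⟩
    intro p hp
    constructor
    · show (Dm p).toFun ∈ _
      rw [hDmf]
      refine vMap0_mem hp ?_
      intro C hC
      obtain ⟨ρ, hρ⟩ := (hS.2.1 hC).1
      exact hσmmax ρ ((hCmmax C hC) hρ) (asel_spec hcxK (hS.2.1 hC) ρ hρ)
    · show (S1 (S2 p)).toFun ∈ _
      rw [hS1f]
      have h2 : (S2 p).toFun ∈ simplexCarrier Cm := by
        rw [hS2f]
        exact sMap0_mem hcxsd hS hp hCmmax
      exact sMap0_mem hcxK (hS.2.1 hCm) h2 hσmmax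
  -- assembly
  have h5 : FnHomotopic F (SL ∘ sdΦ ∘ G2 ∘ G1) := by
    refine (hA.compr (hG2c.comp hG1c)).congr' ?_ rfl
    funext q
    show F (S1 (S2 (G2 (G1 q)))) = F q
    rw [hS2G2, hS1G1]
  have h6 : FnHomotopic (G ∘ F) (G ∘ SL ∘ sdΦ ∘ G2 ∘ G1) := h5.compl hGc
  have h7 : FnHomotopic (G ∘ SL ∘ sdΦ) (S1 ∘ S2) := hB1.trans' hB2
  have h8 : FnHomotopic (G ∘ SL ∘ sdΦ ∘ G2 ∘ G1) id := by
    refine (h7.compr (hG2c.comp hG1c)).congr' rfl ?_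
    funext q
    show S1 (S2 (G2 (G1 q))) = q
    rw [hS2G2, hS1G1]
  exact h6.trans' h8

lemma dowker (R : V → W → Prop) [Nonempty V] [Nonempty W] :
    HomotopyEquivalent (Realization (dK R)) (Realization (dK (flip R))) := by
  obtain ⟨F, hF⟩ := isStd_exists R
  obtain ⟨G, hG⟩ := isStd_exists (flip R)
  have h1 : FnHomotopic (G ∘ F) id := isStd_htpy R hF hG
  have h2 : FnHomotopic (F ∘ G) id := isStd_htpy (flip R) hG hF
  obtain ⟨hc1, hc2, H1⟩ := h1
  obtain ⟨hc3, hc4, H2⟩ := h2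
  exact ⟨⟨⟨F, hF.1⟩, ⟨G, hG.1⟩, H1, H2⟩⟩

end RipsPaper
namespace RipsPaper

/-- Closed Rips complex as a nerve: if `𝒰'` is a cover of a metric
space `X` such that a finite subset of `X` is contained in some element of `𝒰'` iff its
diameter is at most `r`, then `Rips̄(X,r)` is homotopy equivalent to the nerve `N(𝒰')`. -/
theorem ripsClosed_homotopyEquivalent_nerve {X : Type u} [MetricSpace X] (r : ℝ)
    (hr : 0 < r) (𝒰' : Set (Set X)) (hcov : IsCover 𝒰')
    (h𝒰' : ∀ σ : Finset X, σ.Nonempty →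
      ((∃ U ∈ 𝒰', ↑σ ⊆ U) ↔ Metric.diam (σ : Set X) ≤ r)) :
    HomotopyEquivalent (Realization (ripsClosed X r)) (Realization (nerve 𝒰')) := by
  rcases isEmpty_or_nonempty X with hX | hX
  · have hK : ripsClosed X r = (∅ : Set (Finset X)) := by
      ext σ
      simp only [Set.mem_empty_iff_false, iff_false]
      rintro ⟨⟨x, -⟩, -⟩
      exact hX.false x
    have hL : nerve 𝒰' = (∅ : Set (Finset (Set X))) := by
      ext τ
      simp only [Set.mem_empty_iff_false, iff_false]
      rintro ⟨-, -, ⟨x, -⟩⟩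
      exact hX.false x
    rw [hK, hL]
    haveI e1 : IsEmpty (Realization (∅ : Set (Finset X))) :=
      ⟨fun p => by obtain ⟨σ, hσ, -⟩ := p.mem; exact hσ⟩
    haveI e2 : IsEmpty (Realization (∅ : Set (Finset (Set X)))) :=
      ⟨fun p => by obtain ⟨σ, hσ, -⟩ := p.mem; exact hσ⟩
    have c1 : Continuous (fun p : Realization (∅ : Set (Finset X)) =>
        (isEmptyElim p : Realization (∅ : Set (Finset (Set X))))) :=
      continuous_iff_continuousAt.mpr fun p => isEmptyElim p
    have c2 : Continuous (fun q : Realization (∅ : Set (Finset (Set X))) =>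
        (isEmptyElim q : Realization (∅ : Set (Finset X)))) :=
      continuous_iff_continuousAt.mpr fun q => isEmptyElim q
    refine ⟨⟨⟨_, c1⟩, ⟨_, c2⟩, ?_, ?_⟩⟩
    · have : (ContinuousMap.mk _ c2).comp (ContinuousMap.mk _ c1) =
          ContinuousMap.id _ := ContinuousMap.ext fun p => isEmptyElim p
      rw [this]
    · have : (ContinuousMap.mk _ c1).comp (ContinuousMap.mk _ c2) =
          ContinuousMap.id _ := ContinuousMap.ext fun q => isEmptyElim q
      rw [this]
  · set R : X → Set X → Prop := fun x U => U ∈ 𝒰' ∧ x ∈ U with hR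
    have hK : ripsClosed X r = dK R := by
      ext σ
      simp only [ripsClosed, dK, Set.mem_setOf_eq, hR]
      constructor
      · rintro ⟨hne, hdiam⟩
        obtain ⟨U, hU, hsub⟩ := (h𝒰' σ hne).mpr hdiam
        exact ⟨hne, U, fun a ha => ⟨hU, hsub ha⟩⟩
      · rintro ⟨hne, U, hU⟩
        refine ⟨hne, (h𝒰' σ hne).mp ?_⟩
        obtain ⟨a, ha⟩ := hne
        exact ⟨U, (hU a ha).1, fun x hx => (hU x hx).2⟩
    have hL : nerve 𝒰' = dK (flip R) := by
      ext τ
      simp only [nerve, dK, Set.mem_setOf_eq, flip, hR]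
      constructor
      · rintro ⟨hne, hsub, ⟨x, hx⟩⟩
        rw [Set.mem_iInter₂] at hx
        exact ⟨hne, x, fun U hU => ⟨hsub hU, hx U hU⟩⟩
      · rintro ⟨hne, x, hx⟩
        refine ⟨hne, fun U hU => (hx U hU).1, ⟨x, ?_⟩⟩
        rw [Set.mem_iInter₂]
        exact fun U hU => (hx U hU).2
    rw [hK, hL]
    exact dowker R

end RipsPaper
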